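/- The following are equivalent: (i) for every finite group G and every x ∈ G, |N_G(⟨x⟩)| divides |Sol_G(x)|; (ii) for every finite group G and every x ∈ G, the rational number (|C_G(x)| / |N_G(⟨x⟩)|) · ℓ_{C_G(x)} is an integer, where ℓ_{C_G(x)} is the number of orbits of C_G(x) acting by conjugation on Sol_G(x). -/

import Mathlib

def solubilizer (G : Type*) [Group G] (x : G) : Set G :=
  {y | IsSolvable ↥(Subgroup.closure {x, y})}

noncomputable def numConjOrbits {G : Type*} [Group G] (S : Subgroup G) (T : Set G) : ℕ :=
  Nat.card {O : Set G // ∃ a ∈ T, O = {b | ∃ s ∈ S, b = s⁻¹ * a * s}}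

open Subgroup

variable {G : Type*} [Group G]

lemma isSolvable_of_le {H K : Subgroup G} (h : H ≤ K) (hK : IsSolvable K) : IsSolvable H := by
  haveI : Group.IsSolvable K := hK
  exact solvable_of_solvable_injective (Subgroup.inclusion_injective h)

lemma isSolvable_congr {A : Type*} {B : Type*} [Group A] [Group B] (e : A ≃* B) :
    IsSolvable A ↔ IsSolvable B :=
  ⟨fun h => by haveI : Group.IsSolvable A := h; exact solvable_of_surjective (f := e.toMonoidHom) e.surjective,
   fun h => by haveI : Group.IsSolvable B := h;
               exact solvable_of_surjective (f := e.symm.toMonoidHom) e.symm.surjective⟩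

lemma mem_solubilizer {x y : G} : y ∈ solubilizer G x ↔ IsSolvable ↥(Subgroup.closure {x, y}) :=
  Iff.rfl

lemma map_conj_eq_of_mem_normalizer {H : Subgroup G} {n : G} (hn : n ∈ (Subgroup.normalizer (SetLike.coe H))) :
    Subgroup.map ((MulAut.conj n⁻¹) : G →* G) H = H := by
  ext b
  simp only [Subgroup.mem_map]
  constructor
  · rintro ⟨h, hh, rfl⟩
    have := (Subgroup.mem_normalizer_iff.mp ((Subgroup.normalizer (SetLike.coe H)).inv_mem hn) h).mp hh
    simpa [MulAut.conj_apply] using this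
  · intro hb
    refine ⟨n * b * n⁻¹, (Subgroup.mem_normalizer_iff.mp hn b).mp hb, ?_⟩
    simp only [MonoidHom.coe_coe, MulAut.conj_apply]; group

lemma solubilizer_conj {x n y : G} (hn : n ∈ (Subgroup.normalizer (SetLike.coe (zpowers x))))
    (hy : y ∈ solubilizer G x) : n⁻¹ * y * n ∈ solubilizer G x := by
  classical
  set c : G →* G := ((MulAut.conj n⁻¹) : G →* G) with hc
  have hcy : c y = n⁻¹ * y * n := by simp only [hc, MonoidHom.coe_coe, MulAut.conj_apply]; group
  haveI hsol : Group.IsSolvable ↥(closure ({x, y} : Set G)) := hy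
  have hK : IsSolvable ↥(Subgroup.map c (closure {x, y})) :=
    (isSolvable_congr (Subgroup.equivMapOfInjective _ c
      (MulAut.conj n⁻¹).injective)).mp hsol
  refine isSolvable_of_le ?_ hK
  rw [closure_le]
  intro z hz
  rcases hz with hz | hz
  · have hzx : z = x := hz
    subst hzx
    have hx : Subgroup.map c (zpowers z) = zpowers z := map_conj_eq_of_mem_normalizer hn
    have hle : Subgroup.map c (zpowers z) ≤ Subgroup.map c (closure {z, y}) :=
      Subgroup.map_mono (by rw [zpowers_le]; exact subset_closure (by simp))
    exact hle (by rw [hx]; exact mem_zpowers z)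
  · have hzy : z = n⁻¹ * y * n := hz
    subst hzy
    exact ⟨y, subset_closure (by simp), hcy⟩

lemma centralizer_le_normalizer_zpowers {x : G} :
    centralizer {x} ≤ (Subgroup.normalizer (SetLike.coe (zpowers x))) := by
  intro c hc
  have hxc : x * c = c * x := Subgroup.mem_centralizer_iff.mp hc x (Set.mem_singleton x)
  have hcm : ∀ m : ℤ, c * x ^ m = x ^ m * c := fun m =>
    ((show Commute c x from hxc.symm).zpow_right m).eq
  rw [Subgroup.mem_normalizer_iff]
  intro h
  simp only [mem_zpowers_iff]
  constructor
  · rintro ⟨m, rfl⟩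
    exact ⟨m, by rw [hcm m]; group⟩
  · rintro ⟨m, hm⟩
    refine ⟨m, ?_⟩
    have h2 : c⁻¹ * (x ^ m) * c = h := by rw [hm]; group
    have h3 : c⁻¹ * (x ^ m) * c = x ^ m := by
      rw [mul_assoc, ← hcm m, ← mul_assoc, inv_mul_cancel, one_mul]
    rw [← h3, h2]

open Subgroup
variable {G : Type*} [Group G]

def corb (S : Subgroup G) (d : G) : Set G := {b | ∃ s ∈ S, b = s⁻¹ * d * s}

lemma mem_corb_self (S : Subgroup G) (d : G) : d ∈ corb S d :=
  ⟨1, S.one_mem, by group⟩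

lemma mem_corb_of_mem (S : Subgroup G) {s d : G} (hs : s ∈ S) : s⁻¹ * d * s ∈ corb S d :=
  ⟨s, hs, rfl⟩

lemma corb_eq_of_mem {S : Subgroup G} {b d : G} (hb : b ∈ corb S d) : corb S b = corb S d := by
  obtain ⟨s, hs, rfl⟩ := hb
  ext z
  constructor
  · rintro ⟨t, ht, rfl⟩
    exact ⟨s * t, S.mul_mem hs ht, by group⟩
  · rintro ⟨t, ht, rfl⟩
    exact ⟨s⁻¹ * t, S.mul_mem (S.inv_mem hs) ht, by group⟩

lemma corb_alt (S : Subgroup G) (d : G) :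
    corb S d = Set.range (fun s : ↥S => (s : G) * d * (s : G)⁻¹) := by
  ext b
  constructor
  · rintro ⟨s, hs, rfl⟩
    exact ⟨⟨s⁻¹, S.inv_mem hs⟩, by show s⁻¹ * d * s⁻¹⁻¹ = _; group⟩
  · rintro ⟨t, rfl⟩
    exact ⟨(t : G)⁻¹, S.inv_mem t.2, by group⟩

lemma orbit_stab [Finite G] (S : Subgroup G) (d : G) :
    Nat.card (corb S d) * Nat.card (S ⊓ centralizer {d} : Subgroup G) = Nat.card S := by
  classical
  set H : Subgroup ↥S := (centralizer {d}).subgroupOf S with hH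
  have hcard := Subgroup.card_eq_card_quotient_mul_card_subgroup H
  have e2 : ↥H ≃ ↥(S ⊓ centralizer {d} : Subgroup G) :=
    { toFun := fun h => ⟨h.1.1, mem_inf.mpr ⟨h.1.2, h.2⟩⟩
      invFun := fun g => ⟨⟨g.1, (mem_inf.mp g.2).1⟩, by
        simpa [hH, Subgroup.mem_subgroupOf] using (mem_inf.mp g.2).2⟩
      left_inv := fun h => by ext; rfl
      right_inv := fun g => by ext; rfl }
  have resp : ∀ a b : ↥S, (QuotientGroup.leftRel H) a b →
      ((a : G) * d * (a : G)⁻¹ : G) = (b : G) * d * (b : G)⁻¹ := by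
    intro a b hab
    rw [QuotientGroup.leftRel_apply] at hab
    have h1 : (a : G)⁻¹ * b ∈ centralizer {d} := by
      simpa [hH, Subgroup.mem_subgroupOf] using hab
    have h2 : ((a : G)⁻¹ * b) * d = d * ((a : G)⁻¹ * b) :=
      (mem_centralizer_singleton_iff.mp h1)
    have : (a : G)⁻¹ * ((a : G) * d * (a : G)⁻¹) * a = (a:G)⁻¹ * ((b : G) * d * (b : G)⁻¹) * a := by
      calc (a : G)⁻¹ * ((a : G) * d * (a : G)⁻¹) * a = d := by group
      _ = (a:G)⁻¹ * ((b : G) * d * (b : G)⁻¹) * a := by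
          have : (a:G)⁻¹ * ((b : G) * d * (b : G)⁻¹) * a
              = ((a : G)⁻¹ * b) * d * ((a : G)⁻¹ * b)⁻¹ := by group
          rw [this, h2]; group
    exact mul_left_cancel (mul_right_cancel this)
  let f : ↥S ⧸ H → ↥(corb S d) := fun q =>
    Quotient.liftOn' q
      (fun s => (⟨(s : G) * d * (s : G)⁻¹, by
        rw [corb_alt]; exact ⟨s, rfl⟩⟩ : ↥(corb S d)))
      (fun a b hab => Subtype.ext (resp a b hab))
  have hfbij : Function.Bijective f := by
    constructor
    · intro q1 q2
      induction q1 using Quotient.inductionOn' with | h a =>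
      induction q2 using Quotient.inductionOn' with | h b =>
      intro hfe
      apply Quotient.sound'
      rw [QuotientGroup.leftRel_apply]
      have he : (a : G) * d * (a : G)⁻¹ = (b : G) * d * (b : G)⁻¹ :=
        congrArg Subtype.val hfe
      have h2 : ((a : G)⁻¹ * b) * d = d * ((a : G)⁻¹ * b) := by
        have : d * ((a:G)⁻¹ * b) = (a:G)⁻¹ * ((a : G) * d * (a : G)⁻¹) * b := by group
        rw [this, he]; group
      simp only [hH, Subgroup.mem_subgroupOf]
      exact mem_centralizer_singleton_iff.mpr h2
    · rintro ⟨b, hb⟩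
      rw [corb_alt] at hb
      obtain ⟨t, ht⟩ := hb
      exact ⟨Quotient.mk'' t, Subtype.ext ht⟩
  have e1 : ↥S ⧸ H ≃ ↥(corb S d) := Equiv.ofBijective f hfbij
  rw [hcard, Nat.card_congr e1.symm, Nat.card_congr e2, mul_comm]

section P3
variable {G : Type*} [Group G] [Finite G]

omit [Finite G] in
lemma fiber_filter_eq (S : Subgroup G) {A : Finset G}
    (hA : ∀ s ∈ S, ∀ d ∈ A, s⁻¹ * d * s ∈ A) {d : G} (hd : d ∈ A)
    (inst : DecidablePred fun d' => corb S d' = corb S d) (instF : Fintype ↥(corb S d)) :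
    A.filter (fun d' => corb S d' = corb S d) = (corb S d).toFinset := by
  ext b
  simp only [Finset.mem_filter, Set.mem_toFinset]
  constructor
  · rintro ⟨hbA, hbe⟩
    rw [← hbe]
    exact mem_corb_self S b
  · intro hb
    obtain ⟨s, hs, rfl⟩ := hb
    exact ⟨hA s hs d hd, corb_eq_of_mem (mem_corb_of_mem S hs)⟩

lemma fiber_sum (S : Subgroup G) {A : Finset G}
    (hA : ∀ s ∈ S, ∀ d ∈ A, s⁻¹ * d * s ∈ A) (g : G → ℕ)
    (hg : ∀ s ∈ S, ∀ d ∈ A, g (s⁻¹ * d * s) = g d) {d : G} (hd : d ∈ A)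
    (inst : DecidablePred fun d' => corb S d' = corb S d) :
    ∑ d' ∈ A.filter (fun d' => corb S d' = corb S d), g d' = Nat.card (corb S d) * g d := by
  classical
  letI : Fintype G := Fintype.ofFinite G
  rw [fiber_filter_eq S hA hd inst inferInstance]
  have hconst : ∀ b ∈ (corb S d).toFinset, g b = g d := by
    intro b hb
    rw [Set.mem_toFinset] at hb
    obtain ⟨s, hs, rfl⟩ := hb
    exact hg s hs d hd
  rw [Finset.sum_congr rfl hconst, Finset.sum_const, smul_eq_mul]
  congr 1
  rw [Set.toFinset_card, Nat.card_eq_fintype_card]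

lemma dvd_sum_conj (S : Subgroup G) (A : Finset G)
    (hA : ∀ s ∈ S, ∀ d ∈ A, s⁻¹ * d * s ∈ A) (g : G → ℕ)
    (hg : ∀ s ∈ S, ∀ d ∈ A, g (s⁻¹ * d * s) = g d)
    (hdvd : ∀ d ∈ A, Nat.card (S ⊓ Subgroup.centralizer {d} : Subgroup G) ∣ g d) :
    Nat.card S ∣ ∑ d ∈ A, g d := by
  classical
  have himg := Finset.sum_image'
    (f := fun O => ∑ d' ∈ A.filter (fun d'' => corb S d'' = O), g d')
    (g := fun d => corb S d) (s := A) g (fun d _ => rfl)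
  rw [← himg]
  apply Finset.dvd_sum
  intro O hO
  rw [Finset.mem_image] at hO
  obtain ⟨d, hd, rfl⟩ := hO
  rw [fiber_sum S hA g hg hd inferInstance]
  obtain ⟨k, hk⟩ := hdvd d hd
  rw [hk, ← mul_assoc, orbit_stab S d]
  exact Dvd.intro k rfl

lemma ell_mul_card (S : Subgroup G) (T : Set G) (A : Finset G)
    (hAT : ∀ y, y ∈ A ↔ y ∈ T)
    (hA : ∀ s ∈ S, ∀ d ∈ A, s⁻¹ * d * s ∈ A)
    (hg : ∀ s ∈ S, ∀ d ∈ A, Nat.card (S ⊓ Subgroup.centralizer {s⁻¹ * d * s} : Subgroup G)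
      = Nat.card (S ⊓ Subgroup.centralizer {d} : Subgroup G)) :
    numConjOrbits S T * Nat.card S
      = ∑ y ∈ A, Nat.card (S ⊓ Subgroup.centralizer {y} : Subgroup G) := by
  classical
  set g : G → ℕ := fun y => Nat.card (S ⊓ Subgroup.centralizer {y} : Subgroup G) with hgdef
  have key : ∑ O ∈ A.image (fun d => corb S d), Nat.card S = ∑ d ∈ A, g d := by
    apply Finset.sum_image'
    intro d hd
    rw [fiber_sum S hA g hg hd inferInstance]
    exact (orbit_stab S d).symm
  rw [← key, Finset.sum_const, smul_eq_mul]
  congr 1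
  rw [numConjOrbits, ← Nat.card_eq_finsetCard]
  apply Nat.card_congr
  apply Equiv.subtypeEquivRight
  intro O
  simp only [Finset.mem_image, hAT]
  constructor
  · rintro ⟨a, ha, rfl⟩
    exact ⟨a, ha, rfl⟩
  · rintro ⟨a, ha, rfl⟩
    exact ⟨a, ha, rfl⟩
end P3

section P4
variable {G : Type*} [Group G]

lemma conjMap_injective (s : G) : Function.Injective (fun t : G => s⁻¹ * t * s) := by
  intro a b h
  simpa using mul_left_cancel (mul_right_cancel h)

lemma conj_image_centralizer (s y : G) :
    (fun t : G => s⁻¹ * t * s) '' (Subgroup.centralizer {y} : Set G)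
      = (Subgroup.centralizer {s⁻¹ * y * s} : Set G) := by
  ext t
  simp only [Set.mem_image, SetLike.mem_coe, Subgroup.mem_centralizer_singleton_iff]
  constructor
  · rintro ⟨u, hu, rfl⟩
    calc s⁻¹ * u * s * (s⁻¹ * y * s) = s⁻¹ * (u * y) * s := by group
    _ = s⁻¹ * (y * u) * s := by rw [hu]
    _ = s⁻¹ * y * s * (s⁻¹ * u * s) := by group
  · intro ht
    refine ⟨s * t * s⁻¹, ?_, by group⟩
    have h1 : (s * t * s⁻¹) * y = s * (t * (s⁻¹ * y * s)) * s⁻¹ := by group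
    have h2 : y * (s * t * s⁻¹) = s * ((s⁻¹ * y * s) * t) * s⁻¹ := by group
    rw [h1, h2, ht]

lemma conj_image_subgroup {S : Subgroup G} {s : G} (hs : s ∈ S) :
    (fun t : G => s⁻¹ * t * s) '' (S : Set G) = (S : Set G) := by
  ext t
  simp only [Set.mem_image, SetLike.mem_coe]
  constructor
  · rintro ⟨u, hu, rfl⟩
    exact S.mul_mem (S.mul_mem (S.inv_mem hs) hu) hs
  · intro ht
    exact ⟨s * t * s⁻¹, S.mul_mem (S.mul_mem hs ht) (S.inv_mem hs), by group⟩

lemma conj_image_solubilizer {x s : G} (hs : s ∈ (Subgroup.normalizer (SetLike.coe (Subgroup.zpowers x)))) :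
    (fun t : G => s⁻¹ * t * s) '' solubilizer G x = solubilizer G x := by
  ext t
  simp only [Set.mem_image]
  constructor
  · rintro ⟨u, hu, rfl⟩
    exact solubilizer_conj hs hu
  · intro ht
    refine ⟨s * t * s⁻¹, ?_, by group⟩
    have := solubilizer_conj ((Subgroup.normalizer (SetLike.coe (Subgroup.zpowers x))).inv_mem hs) ht
    simpa using this

lemma card_inf_centralizer_conj (S : Subgroup G) {s : G} (hs : s ∈ S) (y : G) :
    Nat.card (S ⊓ Subgroup.centralizer {s⁻¹ * y * s} : Subgroup G)
      = Nat.card (S ⊓ Subgroup.centralizer {y} : Subgroup G) := by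
  have himg : (fun t : G => s⁻¹ * t * s) '' ((S ⊓ Subgroup.centralizer {y} : Subgroup G) : Set G)
      = ((S ⊓ Subgroup.centralizer {s⁻¹ * y * s} : Subgroup G) : Set G) := by
    rw [Subgroup.coe_inf, Subgroup.coe_inf, Set.image_inter (conjMap_injective s),
      conj_image_subgroup hs, conj_image_centralizer]
  have := Nat.card_image_of_injective (conjMap_injective s)
    ((S ⊓ Subgroup.centralizer {y} : Subgroup G) : Set G)
  rw [himg] at this
  exact this

lemma card_sol_inter_centralizer_conj {x s : G} (hs : s ∈ (Subgroup.normalizer (SetLike.coe (Subgroup.zpowers x))))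
    (d : G) :
    Nat.card ((solubilizer G x ∩ (Subgroup.centralizer {s⁻¹ * d * s} : Set G)) : Set G)
      = Nat.card ((solubilizer G x ∩ (Subgroup.centralizer {d} : Set G)) : Set G) := by
  have himg : (fun t : G => s⁻¹ * t * s) '' (solubilizer G x ∩ (Subgroup.centralizer {d} : Set G))
      = solubilizer G x ∩ (Subgroup.centralizer {s⁻¹ * d * s} : Set G) := by
    rw [Set.image_inter (conjMap_injective s), conj_image_solubilizer hs, conj_image_centralizer]
  have := Nat.card_image_of_injective (conjMap_injective s)
    (solubilizer G x ∩ (Subgroup.centralizer {d} : Set G))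
  rw [himg] at this
  exact this

lemma mem_solubilizer_subgroup_iff {H : Subgroup G} {x : G} (hx : x ∈ H) (y : ↥H) :
    y ∈ solubilizer ↥H ⟨x, hx⟩ ↔ (y : G) ∈ solubilizer G x := by
  rw [mem_solubilizer, mem_solubilizer]
  have hmap : Subgroup.map H.subtype (Subgroup.closure {(⟨x, hx⟩ : ↥H), y})
      = Subgroup.closure {x, (y : G)} := by
    rw [MonoidHom.map_closure, Set.image_pair]
    rfl
  rw [isSolvable_congr (Subgroup.equivMapOfInjective _ H.subtype H.subtype_injective), hmap]

lemma card_solubilizer_subgroup {H : Subgroup G} {x : G} (hx : x ∈ H) :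
    Nat.card (solubilizer ↥H ⟨x, hx⟩)
      = Nat.card ((solubilizer G x ∩ (H : Set G)) : Set G) := by
  apply Nat.card_congr
  refine
    { toFun := fun y => ⟨y.1.1, ⟨(mem_solubilizer_subgroup_iff hx y.1).mp y.2, y.1.2⟩⟩
      invFun := fun g => ⟨⟨g.1, g.2.2⟩, (mem_solubilizer_subgroup_iff hx ⟨g.1, g.2.2⟩).mpr g.2.1⟩
      left_inv := fun y => by ext; rfl
      right_inv := fun g => by ext; rfl }

lemma mem_zpowers_subgroup_iff {H : Subgroup G} {x : G} (hx : x ∈ H) (k : ↥H) :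
    k ∈ Subgroup.zpowers (⟨x, hx⟩ : ↥H) ↔ (k : G) ∈ Subgroup.zpowers x := by
  rw [Subgroup.mem_zpowers_iff, Subgroup.mem_zpowers_iff]
  constructor
  · rintro ⟨m, hm⟩
    exact ⟨m, by rw [← hm]; simp⟩
  · rintro ⟨m, hm⟩
    exact ⟨m, by ext; simpa using hm⟩

lemma mem_normalizer_subgroup_iff {H : Subgroup G} {x : G} (hx : x ∈ H) (h : ↥H) :
    h ∈ (Subgroup.normalizer (SetLike.coe (Subgroup.zpowers (⟨x, hx⟩ : ↥H))))
      ↔ (h : G) ∈ (Subgroup.normalizer (SetLike.coe (Subgroup.zpowers x))) := by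
  rw [Subgroup.mem_normalizer_iff, Subgroup.mem_normalizer_iff]
  constructor
  · intro hn g
    constructor
    · intro hg
      have hgH : g ∈ H := Subgroup.zpowers_le.mpr hx hg
      have := (hn ⟨g, hgH⟩).mp ((mem_zpowers_subgroup_iff hx ⟨g, hgH⟩).mpr hg)
      exact (mem_zpowers_subgroup_iff hx _).mp this
    · intro hg
      have hgH' : (h : G) * g * (h : G)⁻¹ ∈ H := Subgroup.zpowers_le.mpr hx hg
      have hgH : g ∈ H := by
        have : g = (h : G)⁻¹ * ((h : G) * g * (h : G)⁻¹) * (h : G) := by group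
        rw [this]
        exact H.mul_mem (H.mul_mem (H.inv_mem h.2) hgH') h.2
      have hk : ((h * ⟨g, hgH⟩ * h⁻¹ : ↥H) : G) ∈ Subgroup.zpowers x := hg
      have := (hn ⟨g, hgH⟩).mpr ((mem_zpowers_subgroup_iff hx _).mpr hk)
      exact (mem_zpowers_subgroup_iff hx _).mp this
  · intro hn k
    constructor
    · intro hk
      apply (mem_zpowers_subgroup_iff hx _).mpr
      exact (hn (k : G)).mp ((mem_zpowers_subgroup_iff hx k).mp hk)
    · intro hk
      apply (mem_zpowers_subgroup_iff hx _).mpr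
      exact (hn (k : G)).mpr ((mem_zpowers_subgroup_iff hx _).mp hk)

lemma card_normalizer_subgroup {H : Subgroup G} {x : G} (hx : x ∈ H) :
    Nat.card ((Subgroup.normalizer (SetLike.coe (Subgroup.zpowers (⟨x, hx⟩ : ↥H)))))
      = Nat.card ((Subgroup.normalizer (SetLike.coe (Subgroup.zpowers x))) ⊓ H : Subgroup G) := by
  apply Nat.card_congr
  refine
    { toFun := fun h => ⟨h.1.1, Subgroup.mem_inf.mpr
        ⟨(mem_normalizer_subgroup_iff hx h.1).mp h.2, h.1.2⟩⟩
      invFun := fun g => ⟨⟨g.1, (Subgroup.mem_inf.mp g.2).2⟩,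
        (mem_normalizer_subgroup_iff hx ⟨g.1, (Subgroup.mem_inf.mp g.2).2⟩).mpr
          (Subgroup.mem_inf.mp g.2).1⟩
      left_inv := fun h => by ext; rfl
      right_inv := fun g => by ext; rfl }
end P4

section P5
variable {G : Type*} [Group G] [Finite G]

lemma conj_mem_centralizer_of_mem_normalizer {x s d : G}
    (hs : s ∈ (Subgroup.normalizer (SetLike.coe (Subgroup.zpowers x)))) (hd : d ∈ Subgroup.centralizer {x}) :
    s⁻¹ * d * s ∈ Subgroup.centralizer {x} := by
  have hsx : s * x * s⁻¹ ∈ Subgroup.zpowers x :=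
    (Subgroup.mem_normalizer_iff.mp hs x).mp (Subgroup.mem_zpowers x)
  obtain ⟨m, hm⟩ := Subgroup.mem_zpowers_iff.mp hsx
  have hdx : Commute d x := (Subgroup.mem_centralizer_singleton_iff.mp hd)
  have hcomm : d * (s * x * s⁻¹) = (s * x * s⁻¹) * d := by
    rw [← hm]
    exact (hdx.zpow_right m).eq
  rw [Subgroup.mem_centralizer_singleton_iff]
  have h1 : s * ((s⁻¹ * d * s) * x) * s⁻¹ = d * (s * x * s⁻¹) := by group
  have h2 : s * (x * (s⁻¹ * d * s)) * s⁻¹ = (s * x * s⁻¹) * d := by group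
  have h3 : s * ((s⁻¹ * d * s) * x) * s⁻¹ = s * (x * (s⁻¹ * d * s)) * s⁻¹ := by
    rw [h1, h2, hcomm]
  exact mul_left_cancel (mul_right_cancel h3)

lemma master_eq (x : G) (A : Finset G)
    (hA : ∀ d, d ∈ A ↔ d ∈ Subgroup.centralizer {x} ∧ d ≠ 1) :
    numConjOrbits (Subgroup.centralizer {x}) (solubilizer G x)
        * Nat.card (Subgroup.centralizer {x})
      = Nat.card (solubilizer G x)
        + ∑ d ∈ A,
            Nat.card ((solubilizer G x ∩ (Subgroup.centralizer {d} : Set G)) : Set G) := by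
  classical
  letI : Fintype G := Fintype.ofFinite G
  set C : Subgroup G := Subgroup.centralizer {x} with hC
  set T : Set G := solubilizer G x with hT
  have hCN : C ≤ (Subgroup.normalizer (SetLike.coe (Subgroup.zpowers x))) := centralizer_le_normalizer_zpowers
  have h1 : numConjOrbits C T * Nat.card C
      = ∑ y ∈ T.toFinset, Nat.card (C ⊓ Subgroup.centralizer {y} : Subgroup G) := by
    apply ell_mul_card C T T.toFinset (fun y => Set.mem_toFinset)
    · intro s hs d hd
      rw [Set.mem_toFinset] at *
      exact solubilizer_conj (hCN hs) hd
    · intro s hs d _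
      exact card_inf_centralizer_conj C hs d
  have h2 : ∀ y : G, Nat.card (C ⊓ Subgroup.centralizer {y} : Subgroup G)
      = ((C : Set G).toFinset.filter (fun d => d * y = y * d)).card := by
    intro y
    rw [← Nat.card_eq_finsetCard]
    apply Nat.card_congr
    apply Equiv.subtypeEquivRight
    intro d
    simp only [Subgroup.mem_inf, Finset.mem_filter, Set.mem_toFinset, SetLike.mem_coe,
      Subgroup.mem_centralizer_singleton_iff]
  have h3 : ∑ y ∈ T.toFinset, ((C : Set G).toFinset.filter (fun d => d * y = y * d)).card
      = ∑ d ∈ (C : Set G).toFinset, (T.toFinset.filter (fun y => d * y = y * d)).card := by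
    simp only [Finset.card_filter]
    exact Finset.sum_comm
  have h4 : ∀ d : G, (T.toFinset.filter (fun y => d * y = y * d)).card
      = Nat.card ((T ∩ (Subgroup.centralizer {d} : Set G)) : Set G) := by
    intro d
    rw [← Nat.card_eq_finsetCard]
    apply Nat.card_congr
    apply Equiv.subtypeEquivRight
    intro y
    simp only [Finset.mem_filter, Set.mem_toFinset, Set.mem_inter_iff, SetLike.mem_coe,
      Subgroup.mem_centralizer_singleton_iff]
    constructor
    · rintro ⟨hy, hc⟩; exact ⟨hy, hc.symm⟩
    · rintro ⟨hy, hc⟩; exact ⟨hy, hc.symm⟩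
  have h1mem : (1 : G) ∈ (C : Set G).toFinset := by
    rw [Set.mem_toFinset]; exact C.one_mem
  have herase : (C : Set G).toFinset.erase 1 = A := by
    ext d
    rw [Finset.mem_erase, hA, Set.mem_toFinset]
    tauto
  have hsplit : ∑ d ∈ (C : Set G).toFinset, (T.toFinset.filter (fun y => d * y = y * d)).card
      = (T.toFinset.filter (fun y => (1:G) * y = y * 1)).card
        + ∑ d ∈ (C : Set G).toFinset.erase 1,
            (T.toFinset.filter (fun y => d * y = y * d)).card :=
    (Finset.add_sum_erase _ _ h1mem).symm
  have hone : (T.toFinset.filter (fun y => (1:G) * y = y * 1)).card = Nat.card T := by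
    rw [Finset.filter_true_of_mem (fun y _ => by group), Nat.card_eq_card_toFinset]
  calc numConjOrbits C T * Nat.card C
      = ∑ y ∈ T.toFinset, Nat.card (C ⊓ Subgroup.centralizer {y} : Subgroup G) := h1
    _ = ∑ y ∈ T.toFinset, ((C : Set G).toFinset.filter (fun d => d * y = y * d)).card := by
        exact Finset.sum_congr rfl (fun y _ => h2 y)
    _ = ∑ d ∈ (C : Set G).toFinset, (T.toFinset.filter (fun y => d * y = y * d)).card := h3
    _ = (T.toFinset.filter (fun y => (1:G) * y = y * 1)).card
        + ∑ d ∈ (C : Set G).toFinset.erase 1,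
            (T.toFinset.filter (fun y => d * y = y * d)).card := hsplit
    _ = Nat.card T + ∑ d ∈ A,
            Nat.card ((T ∩ (Subgroup.centralizer {d} : Set G)) : Set G) := by
        rw [hone, herase]
        exact congrArg _ (Finset.sum_congr rfl (fun d _ => h4 d))

lemma key_dvd (x : G) (A : Finset G)
    (hA : ∀ d, d ∈ A ↔ d ∈ Subgroup.centralizer {x} ∧ d ≠ 1)
    (hsub : ∀ d ∈ A, Nat.card ((Subgroup.normalizer (SetLike.coe (Subgroup.zpowers x))) ⊓ Subgroup.centralizer {d} :
        Subgroup G)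
        ∣ Nat.card ((solubilizer G x ∩ (Subgroup.centralizer {d} : Set G)) : Set G)) :
    Nat.card ((Subgroup.normalizer (SetLike.coe (Subgroup.zpowers x))))
      ∣ ∑ d ∈ A, Nat.card ((solubilizer G x ∩ (Subgroup.centralizer {d} : Set G)) : Set G) := by
  apply dvd_sum_conj ((Subgroup.normalizer (SetLike.coe (Subgroup.zpowers x)))) A
  · intro s hs d hd
    rw [hA] at *
    refine ⟨conj_mem_centralizer_of_mem_normalizer hs hd.1, ?_⟩
    intro hcon
    apply hd.2
    have : d = s * (s⁻¹ * d * s) * s⁻¹ := by group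
    rw [this, hcon]
    group
  · intro s hs d _
    exact card_sol_inter_centralizer_conj hs d
  · exact hsub

lemma hsub_of_stmt (x d : G) (hd : d ∈ Subgroup.centralizer {x})
    (hstmt : ∀ (x' : ↥(Subgroup.centralizer ({d} : Set G))),
      Nat.card (Subgroup.normalizer (SetLike.coe (Subgroup.zpowers x')))
        ∣ Nat.card (solubilizer ↥(Subgroup.centralizer ({d} : Set G)) x')) :
    Nat.card ((Subgroup.normalizer (SetLike.coe (Subgroup.zpowers x))) ⊓ Subgroup.centralizer {d} : Subgroup G)
      ∣ Nat.card ((solubilizer G x ∩ (Subgroup.centralizer {d} : Set G)) : Set G) := by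
  have hxH : x ∈ Subgroup.centralizer ({d} : Set G) :=
    Subgroup.mem_centralizer_singleton_iff.mpr
      (Subgroup.mem_centralizer_singleton_iff.mp hd).symm
  have := hstmt ⟨x, hxH⟩
  rwa [card_normalizer_subgroup hxH, card_solubilizer_subgroup hxH] at this
end P5

section P6
variable {G : Type*} [Group G]

open QuotientGroup

lemma mem_sol_quotient_iff (x y : G) :
    y ∈ solubilizer G x
      ↔ (QuotientGroup.mk' (Subgroup.center G)) y
          ∈ solubilizer (G ⧸ Subgroup.center G) ((QuotientGroup.mk' (Subgroup.center G)) x) := by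
  set q := QuotientGroup.mk' (Subgroup.center G) with hq
  rw [mem_solubilizer, mem_solubilizer]
  have hmap : Subgroup.map q (Subgroup.closure {x, y}) = Subgroup.closure {q x, q y} := by
    rw [MonoidHom.map_closure, Set.image_pair]
  constructor
  · intro hsol
    haveI : Group.IsSolvable _ := hsol
    rw [← hmap]
    exact solvable_of_surjective (q.subgroupMap_surjective (Subgroup.closure {x, y}))
  · intro hsolQ
    set K := Subgroup.closure {x, y} with hK
    set f := q.comp K.subtype with hf
    have hrange : f.range = Subgroup.closure {q x, q y} := by
      rw [hf, MonoidHom.range_comp, Subgroup.range_subtype, hmap]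
    haveI hrs : Group.IsSolvable ↥f.range := by rw [hrange]; exact hsolQ
    have hkerab : ∀ a b : ↥f.rangeRestrict.ker, a * b = b * a := by
      intro a b
      have h0 : f.rangeRestrict (a : ↥K) = 1 := MonoidHom.mem_ker.mp a.2
      have h1 : f (a : ↥K) = 1 := by
        rw [← f.coe_rangeRestrict, h0, OneMemClass.coe_one]
      have ha : ((a : ↥K) : G) ∈ Subgroup.center G :=
        (QuotientGroup.eq_one_iff _).mp h1
      have hcomm := Subgroup.mem_center_iff.mp ha ((b : ↥K) : G)
      apply Subtype.ext
      apply Subtype.ext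
      push_cast
      exact hcomm.symm
    haveI : Group.IsSolvable ↥f.rangeRestrict.ker := isSolvable_of_comm hkerab
    exact solvable_of_ker_le_range f.rangeRestrict.ker.subtype f.rangeRestrict
      (by rw [Subgroup.range_subtype])

lemma card_preimage_mk' (N : Subgroup G) [N.Normal] (B : Set (G ⧸ N)) :
    Nat.card ((QuotientGroup.mk' N) ⁻¹' B) = Nat.card N * Nat.card B := by
  set q := QuotientGroup.mk' N with hq
  have hout : ∀ a : G ⧸ N, q (Quotient.out a) = a := by
    intro a
    rw [QuotientGroup.mk'_apply]
    exact QuotientGroup.out_eq' a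
  have e : ↥(q ⁻¹' B) ≃ ↥N × ↥B :=
    { toFun := fun y => (⟨(Quotient.out (q y.1))⁻¹ * y.1, by
        have : q ((Quotient.out (q y.1))⁻¹ * y.1) = 1 := by
          rw [map_mul, map_inv, hout, inv_mul_cancel]
        exact (QuotientGroup.eq_one_iff _).mp this⟩, ⟨q y.1, y.2⟩)
      invFun := fun p => ⟨Quotient.out (p.2.1 : G ⧸ N) * p.1.1, by
        have h2 : q p.1.1 = 1 := (QuotientGroup.eq_one_iff _).mpr p.1.2
        have : q (Quotient.out (p.2.1 : G ⧸ N) * p.1.1) = p.2.1 := by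
          rw [map_mul, hout, h2, mul_one]
        simp only [Set.mem_preimage, this]
        exact p.2.2⟩
      left_inv := fun y => Subtype.ext (by dsimp only; group)
      right_inv := fun p => by
        have h2 : q p.1.1 = 1 := (QuotientGroup.eq_one_iff _).mpr p.1.2
        have hqy : q (Quotient.out (p.2.1 : G ⧸ N) * p.1.1) = p.2.1 := by
          rw [map_mul, hout, h2, mul_one]
        have h1 : (Quotient.out (q (Quotient.out (p.2.1 : G ⧸ N) * p.1.1)))⁻¹
            * (Quotient.out (p.2.1 : G ⧸ N) * p.1.1) = p.1.1 := by
          rw [hqy]; group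
        exact Prod.ext (Subtype.ext h1) (Subtype.ext hqy) }
  rw [Nat.card_congr e, Nat.card_prod]

lemma card_sol_quotient [Finite G] (x : G) :
    Nat.card (solubilizer G x)
      = Nat.card (Subgroup.center G)
        * Nat.card (solubilizer (G ⧸ Subgroup.center G)
            ((QuotientGroup.mk' (Subgroup.center G)) x)) := by
  have hpre : solubilizer G x
      = (QuotientGroup.mk' (Subgroup.center G)) ⁻¹'
          (solubilizer (G ⧸ Subgroup.center G) ((QuotientGroup.mk' (Subgroup.center G)) x)) := by
    ext y
    exact mem_sol_quotient_iff x y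
  rw [hpre, card_preimage_mk']
end P6

section P7
variable {G : Type*} [Group G]

lemma center_le_normalizer_zpowers (x : G) :
    Subgroup.center G ≤ (Subgroup.normalizer (SetLike.coe (Subgroup.zpowers x))) :=
  (Subgroup.center_le_centralizer {x}).trans centralizer_le_normalizer_zpowers

lemma map_normalizer_le_quotient (x : G) :
    ((Subgroup.normalizer (SetLike.coe (Subgroup.zpowers x)))).map (QuotientGroup.mk' (Subgroup.center G))
      ≤ (Subgroup.normalizer (SetLike.coe (Subgroup.zpowers ((QuotientGroup.mk' (Subgroup.center G)) x)))) := by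
  set q := QuotientGroup.mk' (Subgroup.center G) with hqdef
  intro nb hnb
  obtain ⟨n, hn, rfl⟩ := hnb
  rw [Subgroup.mem_normalizer_iff]
  intro hb
  rw [← MonoidHom.map_zpowers]
  constructor
  · rintro ⟨h, hh, rfl⟩
    exact ⟨n * h * n⁻¹, (Subgroup.mem_normalizer_iff.mp hn h).mp hh,
      by rw [map_mul, map_mul, map_inv]⟩
  · rintro ⟨h', hh', hqh⟩
    obtain ⟨a, rfl⟩ := QuotientGroup.mk'_surjective (Subgroup.center G) hb
    have heq : q (n * a * n⁻¹) = q h' := by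
      rw [map_mul, map_mul, map_inv, hqh]
    obtain ⟨z, hz, hze⟩ := (QuotientGroup.mk'_eq_mk' _).mp heq
    have hzc : ∀ g : G, g * z = z * g := Subgroup.mem_center_iff.mp hz
    have hmem : n⁻¹ * h' * n ∈ Subgroup.zpowers x := by
      simpa using
        (Subgroup.mem_normalizer_iff.mp ((Subgroup.normalizer (SetLike.coe (Subgroup.zpowers x))).inv_mem hn) h').mp hh'
    refine ⟨n⁻¹ * h' * n, hmem, ?_⟩
    have ha : n⁻¹ * h' * n = a * z := by
      rw [← hze]
      have : n⁻¹ * (n * a * n⁻¹ * z) * n = a * (n⁻¹ * z * n) := by group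
      rw [this]
      have h2 : n⁻¹ * z * n = z := by
        rw [mul_assoc, ← hzc n, ← mul_assoc, inv_mul_cancel, one_mul]
      rw [h2]
    have hz1 : q z = 1 := (QuotientGroup.eq_one_iff z).mpr hz
    rw [ha, map_mul, hz1, mul_one]

lemma card_normalizer_eq_quotient [Finite G] (x : G) :
    Nat.card ((Subgroup.normalizer (SetLike.coe (Subgroup.zpowers x))))
      = Nat.card (((Subgroup.normalizer (SetLike.coe (Subgroup.zpowers x)))).map (QuotientGroup.mk' (Subgroup.center G)))
        * Nat.card (Subgroup.center G) := by
  set q := QuotientGroup.mk' (Subgroup.center G) with hqdef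
  set N := (Subgroup.normalizer (SetLike.coe (Subgroup.zpowers x))) with hN
  set f := q.comp N.subtype with hf
  have h1 := Subgroup.card_eq_card_quotient_mul_card_subgroup f.ker
  have h2 : Nat.card (↥N ⧸ f.ker) = Nat.card (N.map q) := by
    rw [Nat.card_congr (QuotientGroup.quotientKerEquivRange f).toEquiv]
    have : f.range = N.map q := by
      rw [hf, MonoidHom.range_comp, Subgroup.range_subtype]
    rw [this]
  have h3 : Nat.card f.ker = Nat.card (Subgroup.center G) := by
    apply Nat.card_congr
    refine
      { toFun := fun k => ⟨k.1.1, (QuotientGroup.eq_one_iff _).mp (MonoidHom.mem_ker.mp k.2)⟩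
        invFun := fun z => ⟨⟨z.1, center_le_normalizer_zpowers x z.2⟩,
          MonoidHom.mem_ker.mpr ((QuotientGroup.eq_one_iff _).mpr z.2)⟩
        left_inv := fun k => by ext; rfl
        right_inv := fun z => by ext; rfl }
  rw [h1, h2, h3]

lemma dvd_of_quotient [Finite G] (x : G)
    (hq : Nat.card ((Subgroup.normalizer (SetLike.coe (Subgroup.zpowers ((QuotientGroup.mk' (Subgroup.center G)) x)))))
        ∣ Nat.card (solubilizer (G ⧸ Subgroup.center G)
            ((QuotientGroup.mk' (Subgroup.center G)) x))) :
    Nat.card ((Subgroup.normalizer (SetLike.coe (Subgroup.zpowers x)))) ∣ Nat.card (solubilizer G x) := by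
  set q := QuotientGroup.mk' (Subgroup.center G) with hqdef
  have h1 := card_normalizer_eq_quotient (G := G) x
  have h2 : Nat.card (((Subgroup.normalizer (SetLike.coe (Subgroup.zpowers x)))).map q)
      ∣ Nat.card ((Subgroup.normalizer (SetLike.coe (Subgroup.zpowers (q x))))) :=
    Subgroup.card_dvd_of_le (map_normalizer_le_quotient x)
  have h3 : Nat.card (((Subgroup.normalizer (SetLike.coe (Subgroup.zpowers x)))).map q)
      ∣ Nat.card (solubilizer (G ⧸ Subgroup.center G) (q x)) := h2.trans hq
  rw [card_sol_quotient x, h1, mul_comm (Nat.card (Subgroup.center G))]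
  exact Nat.mul_dvd_mul h3 dvd_rfl

lemma card_quotient_center_lt [Finite G] (h : Subgroup.center G ≠ ⊥) :
    Nat.card (G ⧸ Subgroup.center G) < Nat.card G := by
  have h1 := Subgroup.card_eq_card_quotient_mul_card_subgroup (Subgroup.center G)
  have h2 : 1 < Nat.card (Subgroup.center G) :=
    (Subgroup.one_lt_card_iff_ne_bot _).mpr h
  have h3 : 0 < Nat.card (G ⧸ Subgroup.center G) := Nat.card_pos
  calc Nat.card (G ⧸ Subgroup.center G)
      < Nat.card (G ⧸ Subgroup.center G) * Nat.card (Subgroup.center G) :=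
        lt_mul_of_one_lt_right h3 h2
    _ = Nat.card G := h1.symm

lemma card_subgroup_lt_of_ne_top [Finite G] {H : Subgroup G} (h : H ≠ ⊤) :
    Nat.card ↥H < Nat.card G := by
  have hs : (H : Set G) ⊂ Set.univ := by
    refine ⟨Set.subset_univ _, fun hsub => h ?_⟩
    rw [← Subgroup.coe_eq_univ]
    exact le_antisymm (Set.subset_univ _) hsub
  have := Set.ncard_lt_ncard hs (Set.finite_univ)
  rwa [Set.ncard_univ, ← Nat.card_coe_set_eq] at this

lemma centralizer_ne_top {d : G} (hd : d ∉ Subgroup.center G) :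
    Subgroup.centralizer {d} ≠ ⊤ := by
  intro h
  exact hd (Subgroup.centralizer_eq_top_iff_subset.mp h (Set.mem_singleton d))
end P7


theorem stmt11 :
    (∀ (G : Type) (_ : Group G) (_ : Finite G) (x : G),
      Nat.card (Subgroup.normalizer (Subgroup.zpowers x : Set G)) ∣ Nat.card (solubilizer G x)) ↔
    (∀ (G : Type) (_ : Group G) (_ : Finite G) (x : G),
      ∃ k : ℤ,
        ((Nat.card (Subgroup.centralizer {x}) : ℚ) /
            (Nat.card (Subgroup.normalizer (Subgroup.zpowers x : Set G)) : ℚ)) *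
          (numConjOrbits (Subgroup.centralizer {x}) (solubilizer G x) : ℚ) = k) := by
  constructor
  · intro h1 G instG instF x
    classical
    set A : Finset G :=
      ((Subgroup.centralizer ({x} : Set G) : Set G) \ {1}).toFinite.toFinset with hAdef
    have hA : ∀ d, d ∈ A ↔ d ∈ Subgroup.centralizer ({x} : Set G) ∧ d ≠ 1 := by
      intro d
      rw [hAdef, Set.Finite.mem_toFinset, Set.mem_diff, Set.mem_singleton_iff,
        SetLike.mem_coe]
    have hsub : ∀ d ∈ A,
        Nat.card ((Subgroup.normalizer (SetLike.coe (Subgroup.zpowers x))) ⊓ Subgroup.centralizer {d} : Subgroup G)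
          ∣ Nat.card ((solubilizer G x ∩ (Subgroup.centralizer {d} : Set G)) : Set G) :=
      fun d hd => hsub_of_stmt x d ((hA d).mp hd).1
        (fun x' => h1 ↥(Subgroup.centralizer ({d} : Set G)) inferInstance inferInstance x')
    have hsum := key_dvd x A hA hsub
    have hT := h1 G instG instF x
    have heq := master_eq x A hA
    have hdvd : Nat.card (Subgroup.normalizer (SetLike.coe (Subgroup.zpowers x)))
        ∣ numConjOrbits (Subgroup.centralizer {x}) (solubilizer G x)
            * Nat.card (Subgroup.centralizer {x}) := by
      rw [heq]
      exact Nat.dvd_add hT hsum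
    obtain ⟨m, hm⟩ := hdvd
    refine ⟨(m : ℤ), ?_⟩
    have hNpos : 0 < Nat.card (Subgroup.normalizer (SetLike.coe (Subgroup.zpowers x))) := Nat.card_pos
    have hN0 : (Nat.card (Subgroup.normalizer (SetLike.coe (Subgroup.zpowers x))) : ℚ) ≠ 0 := by
      exact_mod_cast hNpos.ne'
    rw [div_mul_eq_mul_div, div_eq_iff hN0]
    have hmm : Nat.card (Subgroup.centralizer {x})
        * numConjOrbits (Subgroup.centralizer {x}) (solubilizer G x)
        = m * Nat.card (Subgroup.normalizer (SetLike.coe (Subgroup.zpowers x))) := by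
      rw [mul_comm (Nat.card (Subgroup.centralizer {x})), hm]
      ring
    push_cast
    exact_mod_cast hmm
  · intro h2
    have IND : ∀ n : ℕ, ∀ (G : Type) (instG : Group G) (instF : Finite G),
        Nat.card G ≤ n → ∀ x : G,
        Nat.card (Subgroup.normalizer (SetLike.coe (Subgroup.zpowers x))) ∣ Nat.card (solubilizer G x) := by
      intro n
      induction n with
      | zero =>
        intro G instG instF hle x
        exact absurd (Nat.card_pos (α := G)) (by omega)
      | succ n ih =>
        intro G instG instF hle x
        by_cases hZ : Subgroup.center G = ⊥
        · classical
          set A : Finset G :=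
            ((Subgroup.centralizer ({x} : Set G) : Set G) \ {1}).toFinite.toFinset with hAdef
          have hA : ∀ d, d ∈ A ↔ d ∈ Subgroup.centralizer ({x} : Set G) ∧ d ≠ 1 := by
            intro d
            rw [hAdef, Set.Finite.mem_toFinset, Set.mem_diff, Set.mem_singleton_iff,
              SetLike.mem_coe]
          have hsub : ∀ d ∈ A,
              Nat.card ((Subgroup.normalizer (SetLike.coe (Subgroup.zpowers x))) ⊓ Subgroup.centralizer {d} : Subgroup G)
                ∣ Nat.card ((solubilizer G x ∩ (Subgroup.centralizer {d} : Set G)) : Set G) := by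
            intro d hd
            have hdC := (hA d).mp hd
            have hdZ : d ∉ Subgroup.center G := by
              rw [hZ]
              simpa [Subgroup.mem_bot] using hdC.2
            have hlt : Nat.card ↥(Subgroup.centralizer ({d} : Set G)) < Nat.card G :=
              card_subgroup_lt_of_ne_top (centralizer_ne_top hdZ)
            exact hsub_of_stmt x d hdC.1
              (fun x' => ih ↥(Subgroup.centralizer ({d} : Set G)) inferInstance inferInstance (by omega) x')
          have hsum := key_dvd x A hA hsub
          have heq := master_eq x A hA
          obtain ⟨k, hk⟩ := h2 G instG instF x
          have hNpos : 0 < Nat.card (Subgroup.normalizer (SetLike.coe (Subgroup.zpowers x))) := Nat.card_pos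
          have hN0 : (Nat.card (Subgroup.normalizer (SetLike.coe (Subgroup.zpowers x))) : ℚ) ≠ 0 := by
            exact_mod_cast hNpos.ne'
          rw [div_mul_eq_mul_div, div_eq_iff hN0] at hk
          have hkZ : ((Nat.card (Subgroup.centralizer {x}) : ℤ)
              * (numConjOrbits (Subgroup.centralizer {x}) (solubilizer G x) : ℤ))
              = k * (Nat.card (Subgroup.normalizer (SetLike.coe (Subgroup.zpowers x))) : ℤ) := by
            exact_mod_cast hk
          have hNC : Nat.card (Subgroup.normalizer (SetLike.coe (Subgroup.zpowers x)))
              ∣ numConjOrbits (Subgroup.centralizer {x}) (solubilizer G x)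
                  * Nat.card (Subgroup.centralizer {x}) := by
            apply Int.natCast_dvd_natCast.mp
            exact ⟨k, by rw [Nat.cast_mul]; linarith⟩
          have hfinal := Nat.dvd_sub hNC hsum
          have hTeq : numConjOrbits (Subgroup.centralizer {x}) (solubilizer G x)
              * Nat.card (Subgroup.centralizer {x})
              - (∑ d ∈ A, Nat.card
                  ((solubilizer G x ∩ (Subgroup.centralizer {d} : Set G)) : Set G))
              = Nat.card (solubilizer G x) := by
            omega
          rwa [hTeq] at hfinal
        · have hlt := card_quotient_center_lt hZ
          exact dvd_of_quotient x
            (ih (G ⧸ Subgroup.center G) inferInstance inferInstance (by omega)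
              ((QuotientGroup.mk' (Subgroup.center G)) x))
    intro G instG instF x
    exact IND (Nat.card G) G instG instF le_rfl x
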